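/- arXiv:0905.0385 — 2 statements merged into one kernel-verified Lean document; each statement's English description precedes it below -/
import Mathlib

section
/- Let 5/8 ≤ α ≤ 2/3 and 5α − 3 ≤ d ≤ 1 − α. Then the optimized symmetric Han–Kobayashi multiplexing gain satisfies r_HK(α,d) = (3 − α − 3d)/4, and this value is attained at the power split v = (3α + d − 1)/2, i.e. r((3α + d − 1)/2) = (3 − α − 3d)/4. -/
/-- The no-outage triangle `S_d = {(x,y) : x ≥ 0, y ≥ 0, x + y ≤ d}`. -/
def Sd (d : ℝ) : Set (ℝ × ℝ) := {p : ℝ × ℝ | 0 ≤ p.1 ∧ 0 ≤ p.2 ∧ p.1 + p.2 ≤ d}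

/-- Compound constraint `a₁(v) = inf_{(x,y)∈S_d} (1 - x - v - (α - v - y)⁺)⁺`. -/
noncomputable def a1 (α d v : ℝ) : ℝ :=
  sInf {z : ℝ | ∃ p ∈ Sd d, z = max (1 - p.1 - v - max (α - v - p.2) 0) 0}

/-- Compound constraint `a₂(v) = inf_{(x,y)∈S_d} (1 - x - (α - v - y)⁺)⁺`. -/
noncomputable def a2 (α d v : ℝ) : ℝ :=
  sInf {z : ℝ | ∃ p ∈ Sd d, z = max (1 - p.1 - max (α - v - p.2) 0) 0}

/-- Compound constraint `a₃(v) = inf_{(x,y)∈S_d} (max(1 - x - v, α - y) - (α - v - y)⁺)⁺`. -/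
noncomputable def a3 (α d v : ℝ) : ℝ :=
  sInf {z : ℝ | ∃ p ∈ Sd d, z = max (max (1 - p.1 - v) (α - p.2) - max (α - v - p.2) 0) 0}

/-- Compound constraint `a₄(v) = inf_{(x,y)∈S_d} (max(1 - x, α - y) - (α - v - y)⁺)⁺`. -/
noncomputable def a4 (α d v : ℝ) : ℝ :=
  sInf {z : ℝ | ∃ p ∈ Sd d, z = max (max (1 - p.1) (α - p.2) - max (α - v - p.2) 0) 0}

/-- Symmetric Han–Kobayashi multiplexing gain with power split `v`:
`r(v) = min{a₂, (a₁+a₄)/2, a₃, (a₁+a₃+a₄)/3}`. -/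
noncomputable def rHKsplit (α d v : ℝ) : ℝ :=
  min (a2 α d v)
    (min ((a1 α d v + a4 α d v) / 2)
      (min (a3 α d v) ((a1 α d v + a3 α d v + a4 α d v) / 3)))

/-- Optimized symmetric Han–Kobayashi multiplexing gain `r_HK(α,d) = sup_{v ≥ 0} r(v)`. -/
noncomputable def rHK (α d : ℝ) : ℝ := sSup {z : ℝ | ∃ v : ℝ, 0 ≤ v ∧ z = rHKsplit α d v}

lemma bdd1 (α d v : ℝ) :
    BddBelow {z : ℝ | ∃ p ∈ Sd d, z = max (1 - p.1 - v - max (α - v - p.2) 0) 0} :=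
  ⟨0, by rintro z ⟨p, -, rfl⟩; exact le_max_right _ _⟩

lemma bdd2 (α d v : ℝ) :
    BddBelow {z : ℝ | ∃ p ∈ Sd d, z = max (1 - p.1 - max (α - v - p.2) 0) 0} :=
  ⟨0, by rintro z ⟨p, -, rfl⟩; exact le_max_right _ _⟩

lemma bdd3 (α d v : ℝ) :
    BddBelow {z : ℝ | ∃ p ∈ Sd d, z = max (max (1 - p.1 - v) (α - p.2) - max (α - v - p.2) 0) 0} :=
  ⟨0, by rintro z ⟨p, -, rfl⟩; exact le_max_right _ _⟩

lemma bdd4 (α d v : ℝ) :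
    BddBelow {z : ℝ | ∃ p ∈ Sd d, z = max (max (1 - p.1) (α - p.2) - max (α - v - p.2) 0) 0} :=
  ⟨0, by rintro z ⟨p, -, rfl⟩; exact le_max_right _ _⟩

/-- For `5/8 ≤ α ≤ 2/3` and `5α - 3 ≤ d ≤ 1 - α`,
`r_HK(α,d) = (3 - α - 3d)/4`, attained at the power split `v = (3α + d - 1)/2`. -/
theorem stmt_6 (α d : ℝ) (hα₁ : 5/8 ≤ α) (hα₂ : α ≤ 2/3)
    (hd₁ : 5*α - 3 ≤ d) (hd₂ : d ≤ 1 - α) :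
    rHK α d = (3 - α - 3*d) / 4 ∧ rHKsplit α d ((3*α + d - 1)/2) = (3 - α - 3*d) / 4 := by
  have hd0 : (0:ℝ) ≤ d := by linarith
  have ht0 : (0:ℝ) ≤ (3 - α - 3*d)/4 := by linarith
  have hmemd0 : ((d, (0:ℝ))) ∈ Sd d := by
    refine ⟨hd0, le_refl 0, ?_⟩; show d + 0 ≤ d; linarith
  have hmem0d : (((0:ℝ), d)) ∈ Sd d := by
    refine ⟨le_refl 0, hd0, ?_⟩; show 0 + d ≤ d; linarith
  -- value of a1 at v*
  have ha1 : a1 α d ((3*α + d - 1)/2) = 1 - α - d := by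
    apply le_antisymm
    · apply csInf_le (bdd1 α d _)
      refine ⟨(d, 0), hmemd0, ?_⟩
      show (1:ℝ) - α - d = max (1 - d - (3*α + d - 1)/2 - max (α - (3*α + d - 1)/2 - 0) 0) 0
      rw [sub_zero, max_eq_left (by linarith : (0:ℝ) ≤ α - (3*α + d - 1)/2),
          max_eq_left (by linarith : (0:ℝ) ≤ 1 - d - (3*α + d - 1)/2 - (α - (3*α + d - 1)/2))]
      ring
    · refine le_csInf ⟨_, ⟨(d, 0), hmemd0, rfl⟩⟩ ?_
      rintro z ⟨p, hp, rfl⟩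
      obtain ⟨hx, hy, hxy⟩ := hp
      have h1 : max (α - (3*α + d - 1)/2 - p.2) 0 ≤ α - (3*α + d - 1)/2 :=
        max_le (by linarith) (by linarith)
      refine le_trans ?_ (le_max_left _ _)
      linarith
  -- value of a2 at v*
  have ha2 : a2 α d ((3*α + d - 1)/2) = (1 + α - d)/2 := by
    apply le_antisymm
    · apply csInf_le (bdd2 α d _)
      refine ⟨(d, 0), hmemd0, ?_⟩
      show (1 + α - d)/2 = max (1 - d - max (α - (3*α + d - 1)/2 - 0) 0) 0
      rw [sub_zero, max_eq_left (by linarith : (0:ℝ) ≤ α - (3*α + d - 1)/2),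
          max_eq_left (by linarith : (0:ℝ) ≤ 1 - d - (α - (3*α + d - 1)/2))]
      ring
    · refine le_csInf ⟨_, ⟨(d, 0), hmemd0, rfl⟩⟩ ?_
      rintro z ⟨p, hp, rfl⟩
      obtain ⟨hx, hy, hxy⟩ := hp
      have h1 : max (α - (3*α + d - 1)/2 - p.2) 0 ≤ α - (3*α + d - 1)/2 :=
        max_le (by linarith) (by linarith)
      refine le_trans ?_ (le_max_left _ _)
      linarith
  -- value of a4 at v*
  have ha4 : a4 α d ((3*α + d - 1)/2) = (1 + α - d)/2 := by
    apply le_antisymm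
    · apply csInf_le (bdd4 α d _)
      refine ⟨(d, 0), hmemd0, ?_⟩
      show (1 + α - d)/2 = max (max (1 - d) (α - 0) - max (α - (3*α + d - 1)/2 - 0) 0) 0
      rw [sub_zero, sub_zero, max_eq_left (by linarith : α ≤ 1 - d),
          max_eq_left (by linarith : (0:ℝ) ≤ α - (3*α + d - 1)/2),
          max_eq_left (by linarith : (0:ℝ) ≤ 1 - d - (α - (3*α + d - 1)/2))]
      ring
    · refine le_csInf ⟨_, ⟨(d, 0), hmemd0, rfl⟩⟩ ?_
      rintro z ⟨p, hp, rfl⟩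
      obtain ⟨hx, hy, hxy⟩ := hp
      have h1 : max (α - (3*α + d - 1)/2 - p.2) 0 ≤ α - (3*α + d - 1)/2 :=
        max_le (by linarith) (by linarith)
      have h2 := le_max_left (1 - p.1) (α - p.2)
      refine le_trans ?_ (le_max_left _ _)
      linarith
  -- value of a3 at v*
  have hmemp : ((d - (5*α + 3*d - 3)/4, (5*α + 3*d - 3)/4)) ∈ Sd d := by
    refine ⟨?_, ?_, ?_⟩
    · show (0:ℝ) ≤ d - (5*α + 3*d - 3)/4; linarith
    · show (0:ℝ) ≤ (5*α + 3*d - 3)/4; linarith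
    · show d - (5*α + 3*d - 3)/4 + (5*α + 3*d - 3)/4 ≤ d; linarith
  have ha3 : a3 α d ((3*α + d - 1)/2) = (3 - α - 3*d)/4 := by
    apply le_antisymm
    · apply csInf_le (bdd3 α d _)
      refine ⟨(d - (5*α + 3*d - 3)/4, (5*α + 3*d - 3)/4), hmemp, ?_⟩
      show (3 - α - 3*d)/4 =
        max (max (1 - (d - (5*α + 3*d - 3)/4) - (3*α + d - 1)/2) (α - (5*α + 3*d - 3)/4) -
          max (α - (3*α + d - 1)/2 - (5*α + 3*d - 3)/4) 0) 0
      rw [max_eq_right (by linarith : α - (3*α + d - 1)/2 - (5*α + 3*d - 3)/4 ≤ (0:ℝ)),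
          sub_zero,
          show 1 - (d - (5*α + 3*d - 3)/4) - (3*α + d - 1)/2 = (3 - α - 3*d)/4 by ring,
          show α - (5*α + 3*d - 3)/4 = (3 - α - 3*d)/4 by ring, max_self,
          max_eq_left ht0]
    · refine le_csInf ⟨_, ⟨(d, 0), hmemd0, rfl⟩⟩ ?_
      rintro z ⟨p, hp, rfl⟩
      obtain ⟨hx, hy, hxy⟩ := hp
      rcases le_or_gt (α - (3*α + d - 1)/2 - p.2) 0 with h | h
      · rw [max_eq_right h, sub_zero]
        rcases le_or_gt ((3 - α - 3*d)/4) (α - p.2) with h2 | h2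
        · exact le_trans (le_trans h2 (le_max_right _ _)) (le_max_left _ _)
        · have h3 : (3 - α - 3*d)/4 ≤ 1 - p.1 - (3*α + d - 1)/2 := by linarith
          exact le_trans (le_trans h3 (le_max_left _ _)) (le_max_left _ _)
      · rw [max_eq_left h.le]
        refine le_trans ?_ (le_max_left _ _)
        have h4 := le_max_right (1 - p.1 - (3*α + d - 1)/2) (α - p.2)
        linarith
  -- the split value
  have hsplit : rHKsplit α d ((3*α + d - 1)/2) = (3 - α - 3*d)/4 := by
    simp only [rHKsplit, ha1, ha2, ha3, ha4]
    rw [show ((1 - α - d) + (1 + α - d)/2)/2 = (3 - α - 3*d)/4 by ring,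
        show ((1 - α - d) + (3 - α - 3*d)/4 + (1 + α - d)/2)/3 = (3 - α - 3*d)/4 by ring,
        min_self, min_self]
    exact min_eq_right (by linarith)
  -- upper bound for every v ≥ 0
  have hub : ∀ w : ℝ, 0 ≤ w → rHKsplit α d w ≤ (3 - α - 3*d)/4 := by
    intro w hw
    rcases le_total w ((3*α + d - 1)/2) with hcase | hcase
    · have hwα : w ≤ α := by linarith
      have h1 : a1 α d w ≤ 1 - α - d := by
        apply csInf_le (bdd1 α d w)
        refine ⟨(d, 0), hmemd0, ?_⟩
        show (1:ℝ) - α - d = max (1 - d - w - max (α - w - 0) 0) 0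
        rw [sub_zero, max_eq_left (by linarith : (0:ℝ) ≤ α - w),
            max_eq_left (by linarith : (0:ℝ) ≤ 1 - d - w - (α - w))]
        ring
      have h4 : a4 α d w ≤ 1 - d - α + w := by
        apply csInf_le (bdd4 α d w)
        refine ⟨(d, 0), hmemd0, ?_⟩
        show (1:ℝ) - d - α + w = max (max (1 - d) (α - 0) - max (α - w - 0) 0) 0
        rw [sub_zero, sub_zero, max_eq_left (by linarith : α ≤ 1 - d),
            max_eq_left (by linarith : (0:ℝ) ≤ α - w),
            max_eq_left (by linarith : (0:ℝ) ≤ 1 - d - (α - w))]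
        ring
      calc rHKsplit α d w ≤ (a1 α d w + a4 α d w)/2 :=
            (min_le_right _ _).trans (min_le_left _ _)
        _ ≤ (3 - α - 3*d)/4 := by linarith
    · have h3 : a3 α d w ≤ (3 - α - 3*d)/4 := by
        rcases le_total w (1 - α + d) with hc2 | hc2
        · have hmemq : ((d - (α + d + w - 1)/2, (α + d + w - 1)/2)) ∈ Sd d := by
            refine ⟨?_, ?_, ?_⟩
            · show (0:ℝ) ≤ d - (α + d + w - 1)/2; linarith
            · show (0:ℝ) ≤ (α + d + w - 1)/2; linarith
            · show d - (α + d + w - 1)/2 + (α + d + w - 1)/2 ≤ d; linarith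
          have hle := csInf_le (bdd3 α d w)
            ⟨(d - (α + d + w - 1)/2, (α + d + w - 1)/2), hmemq, rfl⟩
          refine hle.trans ?_
          show max (max (1 - (d - (α + d + w - 1)/2) - w) (α - (α + d + w - 1)/2) -
            max (α - w - (α + d + w - 1)/2) 0) 0 ≤ (3 - α - 3*d)/4
          apply max_le _ ht0
          have h0 : (0:ℝ) ≤ max (α - w - (α + d + w - 1)/2) 0 := le_max_right _ _
          have hm := max_le
            (show 1 - (d - (α + d + w - 1)/2) - w ≤ (3 - α - 3*d)/4 by linarith)
            (show α - (α + d + w - 1)/2 ≤ (3 - α - 3*d)/4 by linarith)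
          linarith
        · have hle := csInf_le (bdd3 α d w) ⟨((0:ℝ), d), hmem0d, rfl⟩
          refine hle.trans ?_
          show max (max (1 - 0 - w) (α - d) - max (α - w - d) 0) 0 ≤ (3 - α - 3*d)/4
          apply max_le _ ht0
          have h0 : (0:ℝ) ≤ max (α - w - d) 0 := le_max_right _ _
          have hm := max_le (show (1:ℝ) - 0 - w ≤ (3 - α - 3*d)/4 by linarith)
            (show α - d ≤ (3 - α - 3*d)/4 by linarith)
          linarith
      calc rHKsplit α d w ≤ a3 α d w :=
            (min_le_right _ _).trans ((min_le_right _ _).trans (min_le_left _ _))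
        _ ≤ _ := h3
  refine ⟨?_, hsplit⟩
  have hv0 : (0:ℝ) ≤ (3*α + d - 1)/2 := by linarith
  have hne : ((3 - α - 3*d)/4) ∈ {z : ℝ | ∃ v : ℝ, 0 ≤ v ∧ z = rHKsplit α d v} :=
    ⟨(3*α + d - 1)/2, hv0, hsplit.symm⟩
  have hba : BddAbove {z : ℝ | ∃ v : ℝ, 0 ≤ v ∧ z = rHKsplit α d v} :=
    ⟨(3 - α - 3*d)/4, by rintro z ⟨w, hw, rfl⟩; exact hub w hw⟩
  simp only [rHK]
  exact le_antisymm (csSup_le ⟨_, hne⟩ (by rintro z ⟨w, hw, rfl⟩; exact hub w hw))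
    (le_csSup hba hne)
end

section
/- Let 5/8 ≤ α ≤ 2/3 and 0 ≤ d ≤ 5α − 3. Then the optimized symmetric Han–Kobayashi multiplexing gain satisfies r_HK(α,d) = α − d, and this value is attained at the power split v = α, i.e. r(α) = α − d. -/
/- ### Auxiliary lemmas -/

lemma a1_le (α d v : ℝ) {x y : ℝ} (hx : 0 ≤ x) (hy : 0 ≤ y) (hxy : x + y ≤ d) :
    a1 α d v ≤ max (1 - x - v - max (α - v - y) 0) 0 := by
  apply csInf_le
  · exact ⟨0, fun z hz => by obtain ⟨q, _, rfl⟩ := hz; exact le_max_right _ _⟩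
  · exact ⟨(x, y), ⟨hx, hy, hxy⟩, rfl⟩

lemma a2_le (α d v : ℝ) {x y : ℝ} (hx : 0 ≤ x) (hy : 0 ≤ y) (hxy : x + y ≤ d) :
    a2 α d v ≤ max (1 - x - max (α - v - y) 0) 0 := by
  apply csInf_le
  · exact ⟨0, fun z hz => by obtain ⟨q, _, rfl⟩ := hz; exact le_max_right _ _⟩
  · exact ⟨(x, y), ⟨hx, hy, hxy⟩, rfl⟩

lemma a3_le (α d v : ℝ) {x y : ℝ} (hx : 0 ≤ x) (hy : 0 ≤ y) (hxy : x + y ≤ d) :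
    a3 α d v ≤ max (max (1 - x - v) (α - y) - max (α - v - y) 0) 0 := by
  apply csInf_le
  · exact ⟨0, fun z hz => by obtain ⟨q, _, rfl⟩ := hz; exact le_max_right _ _⟩
  · exact ⟨(x, y), ⟨hx, hy, hxy⟩, rfl⟩

lemma a4_le (α d v : ℝ) {x y : ℝ} (hx : 0 ≤ x) (hy : 0 ≤ y) (hxy : x + y ≤ d) :
    a4 α d v ≤ max (max (1 - x) (α - y) - max (α - v - y) 0) 0 := by
  apply csInf_le
  · exact ⟨0, fun z hz => by obtain ⟨q, _, rfl⟩ := hz; exact le_max_right _ _⟩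
  · exact ⟨(x, y), ⟨hx, hy, hxy⟩, rfl⟩

lemma le_a1 (α d v c : ℝ) (hd : 0 ≤ d)
    (h : ∀ x y : ℝ, 0 ≤ x → 0 ≤ y → x + y ≤ d →
      c ≤ max (1 - x - v - max (α - v - y) 0) 0) :
    c ≤ a1 α d v := by
  apply le_csInf
  · exact ⟨_, ⟨(0, 0), ⟨le_refl 0, le_refl 0, by simpa⟩, rfl⟩⟩
  · rintro z ⟨⟨x, y⟩, hq, rfl⟩
    exact h x y hq.1 hq.2.1 hq.2.2

lemma le_a2 (α d v c : ℝ) (hd : 0 ≤ d)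
    (h : ∀ x y : ℝ, 0 ≤ x → 0 ≤ y → x + y ≤ d →
      c ≤ max (1 - x - max (α - v - y) 0) 0) :
    c ≤ a2 α d v := by
  apply le_csInf
  · exact ⟨_, ⟨(0, 0), ⟨le_refl 0, le_refl 0, by simpa⟩, rfl⟩⟩
  · rintro z ⟨⟨x, y⟩, hq, rfl⟩
    exact h x y hq.1 hq.2.1 hq.2.2

lemma le_a3 (α d v c : ℝ) (hd : 0 ≤ d)
    (h : ∀ x y : ℝ, 0 ≤ x → 0 ≤ y → x + y ≤ d →
      c ≤ max (max (1 - x - v) (α - y) - max (α - v - y) 0) 0) :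
    c ≤ a3 α d v := by
  apply le_csInf
  · exact ⟨_, ⟨(0, 0), ⟨le_refl 0, le_refl 0, by simpa⟩, rfl⟩⟩
  · rintro z ⟨⟨x, y⟩, hq, rfl⟩
    exact h x y hq.1 hq.2.1 hq.2.2

lemma le_a4 (α d v c : ℝ) (hd : 0 ≤ d)
    (h : ∀ x y : ℝ, 0 ≤ x → 0 ≤ y → x + y ≤ d →
      c ≤ max (max (1 - x) (α - y) - max (α - v - y) 0) 0) :
    c ≤ a4 α d v := by
  apply le_csInf
  · exact ⟨_, ⟨(0, 0), ⟨le_refl 0, le_refl 0, by simpa⟩, rfl⟩⟩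
  · rintro z ⟨⟨x, y⟩, hq, rfl⟩
    exact h x y hq.1 hq.2.1 hq.2.2

section Values

variable {α d : ℝ} (hα₁ : 5/8 ≤ α) (hα₂ : α ≤ 2/3) (hd₁ : 0 ≤ d) (hd₂ : d ≤ 5*α - 3)

include hα₁ hα₂ hd₁ hd₂

/-- `a₁(α) = 1 - α - d`. -/
lemma a1_at_alpha : a1 α d α = 1 - α - d := by
  apply le_antisymm
  · refine (a1_le α d α (x := d) (y := 0) hd₁ le_rfl (by linarith)).trans ?_
    rw [show α - α - (0:ℝ) = 0 by ring, max_self]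
    exact max_le (by linarith) (by linarith)
  · refine le_a1 α d α _ hd₁ fun x y hx hy hxy => ?_
    rw [max_eq_right (by linarith : α - α - y ≤ 0)]
    exact le_trans (by linarith) (le_max_left (1 - x - α - 0) 0)

/-- `a₂(α) = 1 - d`. -/
lemma a2_at_alpha : a2 α d α = 1 - d := by
  apply le_antisymm
  · refine (a2_le α d α (x := d) (y := 0) hd₁ le_rfl (by linarith)).trans ?_
    rw [show α - α - (0:ℝ) = 0 by ring, max_self]
    exact max_le (by linarith) (by linarith)
  · refine le_a2 α d α _ hd₁ fun x y hx hy hxy => ?_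
    rw [max_eq_right (by linarith : α - α - y ≤ 0)]
    exact le_trans (by linarith) (le_max_left (1 - x - 0) 0)

/-- `a₃(α) = α - d`. -/
lemma a3_at_alpha : a3 α d α = α - d := by
  apply le_antisymm
  · refine (a3_le α d α (x := 0) (y := d) le_rfl hd₁ (by linarith)).trans ?_
    have h0 : (0:ℝ) ≤ max (α - α - d) 0 := le_max_right _ _
    have hm : max (1 - 0 - α) (α - d) ≤ α - d := max_le (by linarith) le_rfl
    exact max_le (by linarith) (by linarith)
  · refine le_a3 α d α _ hd₁ fun x y hx hy hxy => ?_
    rw [max_eq_right (by linarith : α - α - y ≤ 0)]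
    have h1 : α - d ≤ α - y := by linarith
    have h2 : α - y ≤ max (1 - x - α) (α - y) := le_max_right _ _
    exact le_trans (by linarith) (le_max_left (max (1 - x - α) (α - y) - 0) 0)

/-- `a₄(α) = 1 - d`. -/
lemma a4_at_alpha : a4 α d α = 1 - d := by
  apply le_antisymm
  · refine (a4_le α d α (x := d) (y := 0) hd₁ le_rfl (by linarith)).trans ?_
    have h0 : (0:ℝ) ≤ max (α - α - (0:ℝ)) 0 := le_max_right _ _
    have hm : max (1 - d) (α - 0) ≤ 1 - d := max_le le_rfl (by linarith)
    exact max_le (by linarith) (by linarith)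
  · refine le_a4 α d α _ hd₁ fun x y hx hy hxy => ?_
    rw [max_eq_right (by linarith : α - α - y ≤ 0)]
    have h1 : 1 - d ≤ 1 - x := by linarith
    have h2 : 1 - x ≤ max (1 - x) (α - y) := le_max_left _ _
    exact le_trans (by linarith) (le_max_left (max (1 - x) (α - y) - 0) 0)

/-- The split value at `v = α`. -/
lemma rHKsplit_at_alpha : rHKsplit α d α = α - d := by
  unfold rHKsplit
  rw [a1_at_alpha hα₁ hα₂ hd₁ hd₂, a2_at_alpha hα₁ hα₂ hd₁ hd₂,
    a3_at_alpha hα₁ hα₂ hd₁ hd₂, a4_at_alpha hα₁ hα₂ hd₁ hd₂]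
  apply le_antisymm
  · exact le_trans (min_le_right _ _) (le_trans (min_le_right _ _) (min_le_left _ _))
  · exact le_min (by linarith) (le_min (by linarith) (le_min le_rfl (by linarith)))

/-- For every `v ≥ 0`, `r(v) ≤ α - d`. -/
lemma rHKsplit_le (v : ℝ) (hv : 0 ≤ v) : rHKsplit α d v ≤ α - d := by
  have hαd : 0 ≤ α - d := by linarith
  have hd2a : d ≤ 2*α - 1 := by linarith
  have h1ad : 0 ≤ 1 - α - d := by linarith
  have hmin2 : rHKsplit α d v ≤ a2 α d v := min_le_left _ _
  have hmin3 : rHKsplit α d v ≤ a3 α d v :=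
    le_trans (min_le_right _ _) (le_trans (min_le_right _ _) (min_le_left _ _))
  have hminS : rHKsplit α d v ≤ (a1 α d v + a3 α d v + a4 α d v) / 3 :=
    le_trans (min_le_right _ _) (le_trans (min_le_right _ _) (min_le_right _ _))
  rcases le_total d (α - 1/2) with hc | hc
  · -- small d: a3 ≤ α - d for all v, via the point (0, d)
    refine le_trans hmin3 ?_
    refine (a3_le α d v (x := 0) (y := d) le_rfl hd₁ (by linarith)).trans ?_
    rcases le_total v (α - d) with hvd | hvd
    · have hZ : α - v - d ≤ max (α - v - d) 0 := le_max_left _ _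
      have hXY : max (1 - 0 - v) (α - d) ≤ (α - d) + (α - v - d) :=
        max_le (by linarith) (by linarith)
      exact max_le (by linarith) (by linarith)
    · have hZ : (0:ℝ) ≤ max (α - v - d) 0 := le_max_right _ _
      have hXY : max (1 - 0 - v) (α - d) ≤ (α - d) + 0 :=
        max_le (by linarith) (by linarith)
      exact max_le (by linarith) (by linarith)
  · -- large d
    rcases le_total v (2*α - 1) with hv1 | hv1
    · -- small v: use a2 at (d, 0)
      refine le_trans hmin2 ?_
      refine (a2_le α d v (x := d) (y := 0) hd₁ le_rfl (by linarith)).trans ?_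
      have hZ : α - v - 0 ≤ max (α - v - 0) 0 := le_max_left _ _
      exact max_le (by linarith) (by linarith)
    · rcases le_total (1 - α + d) v with hv2 | hv2
      · -- large v: use a3 at (0, d)
        refine le_trans hmin3 ?_
        refine (a3_le α d v (x := 0) (y := d) le_rfl hd₁ (by linarith)).trans ?_
        have hZ : (0:ℝ) ≤ max (α - v - d) 0 := le_max_right _ _
        have hXY : max (1 - 0 - v) (α - d) ≤ (α - d) + 0 :=
          max_le (by linarith) (by linarith)
        exact max_le (by linarith) (by linarith)
      · -- middle range: use (a₁ + a₃ + a₄)/3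
        have hvα : v ≤ α := by linarith
        -- a₁ ≤ 1 - α - d, via (d, 0)
        have hA1 : a1 α d v ≤ 1 - α - d := by
          refine (a1_le α d v (x := d) (y := 0) hd₁ le_rfl (by linarith)).trans ?_
          have hZ : α - v - 0 ≤ max (α - v - 0) 0 := le_max_left _ _
          exact max_le (by linarith) (by linarith)
        -- a₄ ≤ 1 - α - d + v, via (d, 0)
        have hA4 : a4 α d v ≤ 1 - α - d + v := by
          refine (a4_le α d v (x := d) (y := 0) hd₁ le_rfl (by linarith)).trans ?_
          have hZ : α - v - 0 ≤ max (α - v - 0) 0 := le_max_left _ _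
          have hXY : max (1 - d) (α - 0) ≤ (1 - α - d + v) + (α - v - 0) :=
            max_le (by linarith) (by linarith)
          exact max_le (by linarith) (by linarith)
        refine le_trans hminS ?_
        rcases le_total v ((1 + α - d)/3) with hv3 | hv3
        · -- a₃ ≤ max (1-α-d) v, via (d, 0)
          rcases le_total v (1 - α - d) with hv4 | hv4
          · have hA3 : a3 α d v ≤ 1 - α - d := by
              refine (a3_le α d v (x := d) (y := 0) hd₁ le_rfl (by linarith)).trans ?_
              have hZ : α - v - 0 ≤ max (α - v - 0) 0 := le_max_left _ _
              have hXY : max (1 - d - v) (α - 0) ≤ (1 - α - d) + (α - v - 0) :=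
                max_le (by linarith) (by linarith)
              exact max_le (by linarith) (by linarith)
            linarith
          · have hA3 : a3 α d v ≤ v := by
              refine (a3_le α d v (x := d) (y := 0) hd₁ le_rfl (by linarith)).trans ?_
              have hZ : α - v - 0 ≤ max (α - v - 0) 0 := le_max_left _ _
              have hXY : max (1 - d - v) (α - 0) ≤ v + (α - v - 0) :=
                max_le (by linarith) (by linarith)
              exact max_le (by linarith) (by linarith)
            linarith
        · -- a₃ ≤ (1 + α - d - v)/2, via the balanced point on x + y = d
          set y₀ : ℝ := (α - 1 + d + v)/2 with hy₀
          have hy₀0 : 0 ≤ y₀ := by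
            have : 1 - α - d ≤ (1 + α - d)/3 := by linarith
            simp only [hy₀]; linarith
          have hy₀d : y₀ ≤ d := by simp only [hy₀]; linarith
          have hA3 : a3 α d v ≤ (1 + α - d - v)/2 := by
            refine (a3_le α d v (x := d - y₀) (y := y₀) (by linarith) hy₀0
              (by linarith)).trans ?_
            have hZ : (0:ℝ) ≤ max (α - v - y₀) 0 := le_max_right _ _
            have hXY : max (1 - (d - y₀) - v) (α - y₀) ≤ (1 + α - d - v)/2 + 0 := by
              apply max_le
              · simp only [hy₀]; linarith
              · simp only [hy₀]; linarith
            exact max_le (by linarith) (by linarith)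
          linarith

end Values

/-- For `5/8 ≤ α ≤ 2/3` and `0 ≤ d ≤ 5α - 3`,
`r_HK(α,d) = α - d`, attained at the power split `v = α`. -/
theorem stmt_7 (α d : ℝ) (hα₁ : 5/8 ≤ α) (hα₂ : α ≤ 2/3)
    (hd₁ : 0 ≤ d) (hd₂ : d ≤ 5*α - 3) :
    rHK α d = α - d ∧ rHKsplit α d α = α - d := by
  have hsplit : rHKsplit α d α = α - d := rHKsplit_at_alpha hα₁ hα₂ hd₁ hd₂
  have hub : ∀ z ∈ {z : ℝ | ∃ v : ℝ, 0 ≤ v ∧ z = rHKsplit α d v}, z ≤ α - d := by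
    rintro z ⟨v, hv, rfl⟩
    exact rHKsplit_le hα₁ hα₂ hd₁ hd₂ v hv
  have hmem : (α - d) ∈ {z : ℝ | ∃ v : ℝ, 0 ≤ v ∧ z = rHKsplit α d v} :=
    ⟨α, by linarith, hsplit.symm⟩
  refine ⟨le_antisymm (csSup_le ⟨_, hmem⟩ hub) (le_csSup ⟨α - d, hub⟩ hmem), hsplit⟩
end
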